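/- Let G, G', and G'' be finite groups of equal order n, let Ψ = (ψ_{a,b})_{a∈G,b∈G'} be a (G,G')-invariant quantum Latin square with transformation matrix U and Ψ' = (ψ'_{b,c})_{b∈G',c∈G''} a (G',G'')-invariant quantum Latin square with transformation matrix U'. Define the composition Φ = (φ_{a,c})_{a∈G,c∈G''} by φ_{a,c} = (1/√n)·∑_{b∈G'} ψ_{a,b} ⊗ ψ'_{b,c}. Then ⟨φ_{a,c}, φ_{b,d}⟩ = (U·U')_{a⁻¹b, c⁻¹d} for all a,b ∈ G and c,d ∈ G''; every row and every column of Φ is an orthonormal basis of one common n-dimensional subspace of the tensor product space; hence Φ is a (G,G'')-invariant quantum Latin square with transformation matrix U·U'. In particular U·U' is a (G,G'')-transformation matrix. -/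

import Mathlib

open scoped BigOperators Classical ComplexOrder

/-- A `(G,G')`-invariant quantum Latin square with entries in `ℂ^{G'}`:
every row and every column forms an orthonormal basis, and the inner product
`⟨ψ_{a,b}, ψ_{c,d}⟩` depends only on `a⁻¹c ∈ G` and `b⁻¹d ∈ G'`. -/
def IsInvQLS {G G' : Type*} [Group G] [Group G'] [Fintype G] [Fintype G']
    (ψ : G → G' → EuclideanSpace ℂ G') : Prop :=
  (∀ a : G, ∃ B : OrthonormalBasis G' ℂ (EuclideanSpace ℂ G'), ∀ b : G', B b = ψ a b) ∧
  (∀ b : G', ∃ B : OrthonormalBasis G ℂ (EuclideanSpace ℂ G'), ∀ a : G, B a = ψ a b) ∧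
  (∀ (a c a' c' : G) (b d b' d' : G'),
    a⁻¹ * c = a'⁻¹ * c' → b⁻¹ * d = b'⁻¹ * d' →
    (inner ℂ (ψ a b) (ψ c d) : ℂ) = inner ℂ (ψ a' b') (ψ c' d'))

/-- The transformation matrix of a `(G,G')`-invariant quantum Latin square:
`U_{x,y} = ⟨ψ_{a,b}, ψ_{c,d}⟩` for any `a,c ∈ G`, `b,d ∈ G'` with `a⁻¹c = x`, `b⁻¹d = y`
(here realized with `a = e`, `b = e`). -/
noncomputable def transMat {G G' : Type*} [Group G] [Group G'] [Fintype G']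
    (ψ : G → G' → EuclideanSpace ℂ G') : Matrix G G' ℂ :=
  Matrix.of fun x y => (inner ℂ (ψ 1 1) (ψ x y) : ℂ)

/-- A `(G,G')`-transformation matrix: `U` is unitary, `conj U_{a,b} = U_{a⁻¹,b⁻¹}`, and
`U_{ab,c} = ∑_{x y = c} U_{a,x} U_{b,y}`. -/
def IsTransMat {G G' : Type*} [Group G] [Group G'] [Fintype G] [Fintype G']
    [DecidableEq G] [DecidableEq G'] (U : Matrix G G' ℂ) : Prop :=
  (U * U.conjTranspose = 1 ∧ U.conjTranspose * U = 1) ∧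
  (∀ (a : G) (b : G'), star (U a b) = U a⁻¹ b⁻¹) ∧
  (∀ (a b : G) (c : G'),
    U (a * b) c = ∑ x : G', ∑ y : G', if x * y = c then U a x * U b y else 0)

/-- The composition of (the entry arrays of) two quantum Latin squares:
`φ_{a,c} = (1/√n) ∑_{b ∈ G'} ψ_{a,b} ⊗ ψ'_{b,c}`, realized inside `ℂ^{G' × G''} ≅ ℂⁿ ⊗ ℂⁿ`. -/
noncomputable def qlsComp {G G' G'' : Type*} [Fintype G']
    (ψ : G → G' → EuclideanSpace ℂ G') (ψ' : G' → G'' → EuclideanSpace ℂ G'') :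
    G → G'' → EuclideanSpace ℂ (G' × G'') :=
  fun a c => (WithLp.equiv 2 ((G' × G'') → ℂ)).symm
    (fun xy => ((Real.sqrt (Fintype.card G') : ℂ))⁻¹ * ∑ b : G', ψ a b xy.1 * ψ' b c xy.2)

section Aux

variable {G G' : Type*} [Group G] [Group G'] [Fintype G] [Fintype G']
  {ψ : G → G' → EuclideanSpace ℂ G'} (hψ : IsInvQLS ψ)
include hψ

lemma inner_eq_transMat (a c : G) (b d : G') :
    (inner ℂ (ψ a b) (ψ c d) : ℂ) = transMat ψ (a⁻¹ * c) (b⁻¹ * d) := by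
  rw [transMat, Matrix.of_apply]
  exact hψ.2.2 a c 1 (a⁻¹ * c) b d 1 (b⁻¹ * d) (by group) (by group)

lemma transMat_row_one (y : G') : transMat ψ 1 y = if y = 1 then 1 else 0 := by
  obtain ⟨B, hB⟩ := hψ.1 1
  have := (orthonormal_iff_ite.mp B.orthonormal) 1 y
  rw [hB, hB] at this
  rw [transMat, Matrix.of_apply, this]
  simp [eq_comm]

lemma transMat_col_one (x : G) : transMat ψ x 1 = if x = 1 then 1 else 0 := by
  obtain ⟨B, hB⟩ := hψ.2.1 1
  have := (orthonormal_iff_ite.mp B.orthonormal) 1 x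
  rw [hB, hB] at this
  rw [transMat, Matrix.of_apply, this]
  simp [eq_comm]

lemma res_row (a : G) (v w : EuclideanSpace ℂ G') :
    ∑ x : G', (inner ℂ v (ψ a x) : ℂ) * inner ℂ (ψ a x) w = inner ℂ v w := by
  obtain ⟨B, hB⟩ := hψ.1 a
  simp_rw [← hB]
  exact B.sum_inner_mul_inner v w

lemma res_col (b : G') (v w : EuclideanSpace ℂ G') :
    ∑ x : G, (inner ℂ v (ψ x b) : ℂ) * inner ℂ (ψ x b) w = inner ℂ v w := by
  obtain ⟨B, hB⟩ := hψ.2.1 b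
  simp_rw [← hB]
  exact B.sum_inner_mul_inner v w

lemma star_transMat (a : G) (b : G') :
    star (transMat ψ a b) = transMat ψ a⁻¹ b⁻¹ := by
  have h1 : star (transMat ψ a b) = (inner ℂ (ψ a b) (ψ 1 1) : ℂ) := by
    rw [transMat, Matrix.of_apply]; exact inner_conj_symm _ _
  rw [h1, inner_eq_transMat hψ]; simp

lemma transMat_unitary_left : transMat ψ * (transMat ψ).conjTranspose = 1 := by
  ext x x'
  rw [Matrix.mul_apply, Matrix.one_apply]
  have h1 : ∀ y : G', transMat ψ x y * (transMat ψ).conjTranspose y x'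
      = (inner ℂ (ψ 1 1) (ψ x y) : ℂ) * inner ℂ (ψ x y) (ψ (x * x'⁻¹) 1) := by
    intro y
    rw [Matrix.conjTranspose_apply, star_transMat hψ]
    congr 1
    rw [inner_eq_transMat hψ]
    congr 2 <;> group
  rw [Finset.sum_congr rfl (fun y _ => h1 y), res_row hψ, inner_eq_transMat hψ]
  simp only [one_mul, inv_one, mul_one]
  rw [transMat_col_one hψ]
  simp [mul_inv_eq_one]

lemma transMat_unitary_right : (transMat ψ).conjTranspose * transMat ψ = 1 := by
  ext y y'
  rw [Matrix.mul_apply, Matrix.one_apply]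
  have h0 : ∑ x : G, (transMat ψ).conjTranspose y x * transMat ψ x y'
      = ∑ x : G, (transMat ψ) x⁻¹ y⁻¹ * transMat ψ x y' := by
    refine Finset.sum_congr rfl fun x _ => ?_
    rw [Matrix.conjTranspose_apply, star_transMat hψ]
  rw [h0]
  have h2 : ∑ x : G, transMat ψ x⁻¹ y⁻¹ * transMat ψ x y'
      = ∑ x : G, (inner ℂ (ψ 1 y) (ψ x 1) : ℂ) * inner ℂ (ψ x 1) (ψ 1 y') := by
    refine Fintype.sum_equiv (Equiv.inv G) _ _ fun x => ?_
    simp only [Equiv.inv_apply]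
    rw [inner_eq_transMat hψ, inner_eq_transMat hψ]
    congr 2 <;> group
  rw [h2, res_col hψ, inner_eq_transMat hψ]
  simp only [one_mul, inv_one]
  rw [transMat_row_one hψ]
  simp [inv_mul_eq_one]

lemma transMat_mul (a b : G) (c : G') :
    transMat ψ (a * b) c = ∑ x : G', transMat ψ a x * transMat ψ b (x⁻¹ * c) := by
  have h1 : ∀ x : G', transMat ψ a x * transMat ψ b (x⁻¹ * c)
      = (inner ℂ (ψ 1 1) (ψ a x) : ℂ) * inner ℂ (ψ a x) (ψ (a * b) c) := by
    intro x
    congr 1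
    rw [inner_eq_transMat hψ]
    congr 2 <;> group
  rw [Finset.sum_congr rfl (fun x _ => h1 x), res_row hψ]
  rw [transMat, Matrix.of_apply]

end Aux

lemma sum4_comm {M : Type*} [AddCommMonoid M] {α β γ δ : Type*}
    [Fintype α] [Fintype β] [Fintype γ] [Fintype δ] (f : α → β → γ → δ → M) :
    ∑ x : α, ∑ y : β, ∑ q : γ, ∑ p : δ, f x y q p
      = ∑ p : δ, ∑ q : γ, ∑ x : α, ∑ y : β, f x y q p :=
  calc ∑ x : α, ∑ y : β, ∑ q : γ, ∑ p : δ, f x y q p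
      = ∑ x : α, ∑ y : β, ∑ p : δ, ∑ q : γ, f x y q p :=
        Finset.sum_congr rfl fun _ _ => Finset.sum_congr rfl fun _ _ => Finset.sum_comm
    _ = ∑ x : α, ∑ p : δ, ∑ y : β, ∑ q : γ, f x y q p :=
        Finset.sum_congr rfl fun _ _ => Finset.sum_comm
    _ = ∑ p : δ, ∑ x : α, ∑ y : β, ∑ q : γ, f x y q p := Finset.sum_comm
    _ = ∑ p : δ, ∑ x : α, ∑ q : γ, ∑ y : β, f x y q p :=
        Finset.sum_congr rfl fun _ _ => Finset.sum_congr rfl fun _ _ => Finset.sum_comm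
    _ = ∑ p : δ, ∑ q : γ, ∑ x : α, ∑ y : β, f x y q p :=
        Finset.sum_congr rfl fun _ _ => Finset.sum_comm

lemma sum3_comm {M : Type*} [AddCommMonoid M] {α β γ : Type*}
    [Fintype α] [Fintype β] [Fintype γ] (f : α → β → γ → M) :
    ∑ x : α, ∑ y : β, ∑ s : γ, f x y s = ∑ s : γ, ∑ x : α, ∑ y : β, f x y s :=
  calc ∑ x : α, ∑ y : β, ∑ s : γ, f x y s
      = ∑ x : α, ∑ s : γ, ∑ y : β, f x y s :=
        Finset.sum_congr rfl fun _ _ => Finset.sum_comm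
    _ = ∑ s : γ, ∑ x : α, ∑ y : β, f x y s := Finset.sum_comm

lemma comp_inner_aux {G G' G'' : Type*} [Fintype G'] [Fintype G'']
    (ψ : G → G' → EuclideanSpace ℂ G') (ψ' : G' → G'' → EuclideanSpace ℂ G'')
    (a b : G) (c d : G'') :
    (inner ℂ (qlsComp ψ ψ' a c) (qlsComp ψ ψ' b d) : ℂ)
      = ((Real.sqrt (Fintype.card G') : ℂ))⁻¹ * ((Real.sqrt (Fintype.card G') : ℂ))⁻¹
        * ∑ p : G', ∑ q : G', (inner ℂ (ψ a p) (ψ b q) : ℂ) * (inner ℂ (ψ' p c) (ψ' q d) : ℂ) := by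
  simp only [qlsComp, PiLp.inner_apply, RCLike.inner_apply, WithLp.equiv_symm_apply, PiLp.toLp_apply,
    Fintype.sum_prod_type, map_mul, map_sum, map_inv₀, Complex.conj_ofReal]
  simp_rw [Finset.sum_mul_sum, Finset.mul_sum, Finset.sum_mul]
  refine Eq.trans (sum4_comm _) (Eq.trans Finset.sum_comm ?_)
  refine Finset.sum_congr rfl fun p _ => ?_
  refine Finset.sum_congr rfl fun q _ => ?_
  refine Finset.sum_congr rfl fun x _ => ?_
  refine Finset.sum_congr rfl fun y _ => ?_
  ring

theorem stmt9 {G G' G'' : Type*} [Group G] [Group G'] [Group G'']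
    [Fintype G] [Fintype G'] [Fintype G''] [DecidableEq G] [DecidableEq G'']
    (hcard : Fintype.card G = Fintype.card G')
    (hcard' : Fintype.card G' = Fintype.card G'')
    (ψ : G → G' → EuclideanSpace ℂ G') (ψ' : G' → G'' → EuclideanSpace ℂ G'')
    (U : Matrix G G' ℂ) (U' : Matrix G' G'' ℂ)
    (hψ : IsInvQLS ψ) (hψ' : IsInvQLS ψ')
    (hU : transMat ψ = U) (hU' : transMat ψ' = U') :
    (∀ (a b : G) (c d : G''),
      (inner ℂ (qlsComp ψ ψ' a c) (qlsComp ψ ψ' b d) : ℂ) = (U * U') (a⁻¹ * b) (c⁻¹ * d)) ∧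
    (∃ S : Submodule ℂ (EuclideanSpace ℂ (G' × G'')),
      Module.finrank ℂ ↥S = Fintype.card G ∧
      (∀ a : G, Orthonormal ℂ (fun c : G'' => qlsComp ψ ψ' a c) ∧
        Submodule.span ℂ (Set.range fun c : G'' => qlsComp ψ ψ' a c) = S) ∧
      (∀ c : G'', Orthonormal ℂ (fun a : G => qlsComp ψ ψ' a c) ∧
        Submodule.span ℂ (Set.range fun a : G => qlsComp ψ ψ' a c) = S)) ∧
    IsTransMat (U * U') := by
  subst hU hU'
  -- the key inner product formula
  have key : ∀ (a b : G) (c d : G''),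
      (inner ℂ (qlsComp ψ ψ' a c) (qlsComp ψ ψ' b d) : ℂ)
        = (transMat ψ * transMat ψ') (a⁻¹ * b) (c⁻¹ * d) := by
    intro a b c d
    rw [comp_inner_aux]
    have h1 : ∀ p q : G', (inner ℂ (ψ a p) (ψ b q) : ℂ) * inner ℂ (ψ' p c) (ψ' q d)
        = transMat ψ (a⁻¹ * b) (p⁻¹ * q) * transMat ψ' (p⁻¹ * q) (c⁻¹ * d) := fun p q => by
      rw [inner_eq_transMat hψ, inner_eq_transMat hψ']
    have h2 : ∀ p : G', ∑ q : G', transMat ψ (a⁻¹ * b) (p⁻¹ * q) * transMat ψ' (p⁻¹ * q) (c⁻¹ * d)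
        = (transMat ψ * transMat ψ') (a⁻¹ * b) (c⁻¹ * d) := by
      intro p
      rw [Matrix.mul_apply]
      exact (Fintype.sum_equiv (Equiv.mulLeft p) _ _ (fun z => by simp)).symm
    have h3 : ∑ p : G', ∑ q : G', (inner ℂ (ψ a p) (ψ b q) : ℂ) * inner ℂ (ψ' p c) (ψ' q d)
        = (Fintype.card G' : ℂ) * (transMat ψ * transMat ψ') (a⁻¹ * b) (c⁻¹ * d) := by
      rw [Finset.sum_congr rfl
        (fun p _ => (Finset.sum_congr rfl (fun q _ => h1 p q)).trans (h2 p))]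
      rw [Finset.sum_const, Finset.card_univ, nsmul_eq_mul]
    rw [h3]
    have h4 : ((Real.sqrt (Fintype.card G') : ℂ)) * (Real.sqrt (Fintype.card G') : ℂ)
        = (Fintype.card G' : ℂ) := by
      rw [← Complex.ofReal_mul, Real.mul_self_sqrt (Nat.cast_nonneg _)]
      norm_cast
    have h5 : ((Real.sqrt (Fintype.card G') : ℂ)) ≠ 0 := by
      refine Complex.ofReal_ne_zero.mpr (ne_of_gt ?_)
      exact Real.sqrt_pos.mpr (Nat.cast_pos.mpr Fintype.card_pos)
    rw [← h4]
    field_simp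
  -- delta values of V
  have hV1 : ∀ y : G'', (transMat ψ * transMat ψ') 1 y = if y = 1 then 1 else 0 := by
    intro y
    rw [Matrix.mul_apply]
    rw [Finset.sum_congr rfl fun z _ => by rw [transMat_row_one hψ]]
    simp only [ite_mul, one_mul, zero_mul, Finset.sum_ite_eq', Finset.mem_univ, if_true]
    simp [transMat_row_one hψ']
  have hVcol : ∀ x : G, (transMat ψ * transMat ψ') x 1 = if x = 1 then 1 else 0 := by
    intro x
    rw [Matrix.mul_apply]
    rw [Finset.sum_congr rfl fun z _ => by rw [transMat_col_one hψ']]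
    simp only [mul_ite, mul_one, mul_zero, Finset.sum_ite_eq', Finset.mem_univ, if_true]
    simp [transMat_col_one hψ]
  -- star property of V
  have hVstar : ∀ (a : G) (b : G''),
      star ((transMat ψ * transMat ψ') a b) = (transMat ψ * transMat ψ') a⁻¹ b⁻¹ := by
    intro a b
    rw [Matrix.mul_apply, Matrix.mul_apply, star_sum]
    refine Fintype.sum_equiv (Equiv.inv G') _ _ fun z => ?_
    rw [star_mul', star_transMat hψ, star_transMat hψ']
    simp
  -- unitarity of V
  have hVu1 : (transMat ψ * transMat ψ') * (transMat ψ * transMat ψ').conjTranspose = 1 := by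
    rw [Matrix.conjTranspose_mul, Matrix.mul_assoc,
      ← Matrix.mul_assoc (transMat ψ') (transMat ψ').conjTranspose,
      transMat_unitary_left hψ', Matrix.one_mul, transMat_unitary_left hψ]
    convert rfl
  have hVu2 : (transMat ψ * transMat ψ').conjTranspose * (transMat ψ * transMat ψ') = 1 := by
    rw [Matrix.conjTranspose_mul, Matrix.mul_assoc,
      ← Matrix.mul_assoc (transMat ψ).conjTranspose (transMat ψ),
      transMat_unitary_right hψ, Matrix.one_mul, transMat_unitary_right hψ']
    convert rfl
  -- orthonormality of rows and columns
  have orthRow : ∀ a : G, Orthonormal ℂ (fun c : G'' => qlsComp ψ ψ' a c) := by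
    intro a
    rw [orthonormal_iff_ite]
    intro c d
    rw [key a a c d, show a⁻¹ * a = 1 by group, hV1]
    by_cases hcd : c = d <;> simp [hcd, inv_mul_eq_one]
  have orthCol : ∀ c : G'', Orthonormal ℂ (fun a : G => qlsComp ψ ψ' a c) := by
    intro c
    rw [orthonormal_iff_ite]
    intro a b
    rw [key a b c c, show c⁻¹ * c = 1 by group, hVcol]
    by_cases hab : a = b <;> simp [hab, inv_mul_eq_one]
  -- row sums of |V|²
  have hVrowsum : ∀ (a : G) (c : G''),
      ∑ d : G'', (transMat ψ * transMat ψ') a (d⁻¹ * c)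
        * star ((transMat ψ * transMat ψ') a (d⁻¹ * c)) = 1 := by
    intro a c
    have h6 : ∑ d : G'', (transMat ψ * transMat ψ') a (d⁻¹ * c)
          * star ((transMat ψ * transMat ψ') a (d⁻¹ * c))
        = ∑ y : G'', (transMat ψ * transMat ψ') a y * star ((transMat ψ * transMat ψ') a y) := by
      refine Fintype.sum_equiv ((Equiv.inv G'').trans (Equiv.mulRight c)) _ _ fun d => ?_
      simp
    have h7 := congrFun (congrFun hVu1 a) a
    rw [Matrix.mul_apply] at h7
    simp only [Matrix.conjTranspose_apply] at h7
    rw [h6, h7, Matrix.one_apply_eq]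
  -- membership of all entries in the span of the first row
  have hmem : ∀ (a : G) (c : G''), qlsComp ψ ψ' a c ∈
      Submodule.span ℂ (Set.range fun c : G'' => qlsComp ψ ψ' 1 c) := by
    intro a c
    have hw : qlsComp ψ ψ' a c
        = ∑ d : G'', (transMat ψ * transMat ψ') a (d⁻¹ * c) • qlsComp ψ ψ' 1 d := by
      rw [← sub_eq_zero, ← inner_self_eq_zero (𝕜 := ℂ)]
      rw [inner_sub_sub_self]
      have hvv : (inner ℂ (qlsComp ψ ψ' a c) (qlsComp ψ ψ' a c) : ℂ) = 1 := by
        rw [key, show a⁻¹ * a = 1 by group, hV1]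
        simp [inv_mul_eq_one]
      have hvw : (inner ℂ (qlsComp ψ ψ' a c)
            (∑ d : G'', (transMat ψ * transMat ψ') a (d⁻¹ * c) • qlsComp ψ ψ' 1 d) : ℂ)
          = ∑ d : G'', (transMat ψ * transMat ψ') a (d⁻¹ * c)
              * star ((transMat ψ * transMat ψ') a (d⁻¹ * c)) := by
        rw [inner_sum]
        simp_rw [inner_smul_right]
        refine Finset.sum_congr rfl fun d _ => ?_
        congr 1
        rw [key, hVstar]
        congr 2 <;> group
      have hwv : (inner ℂ (∑ d : G'', (transMat ψ * transMat ψ') a (d⁻¹ * c) • qlsComp ψ ψ' 1 d)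
            (qlsComp ψ ψ' a c) : ℂ)
          = ∑ d : G'', (starRingEnd ℂ) ((transMat ψ * transMat ψ') a (d⁻¹ * c))
              * (transMat ψ * transMat ψ') a (d⁻¹ * c) := by
        rw [sum_inner]
        simp_rw [inner_smul_left]
        refine Finset.sum_congr rfl fun d _ => ?_
        congr 1
        rw [key]
        congr 2 <;> group
      have hww : (inner ℂ (∑ d : G'', (transMat ψ * transMat ψ') a (d⁻¹ * c) • qlsComp ψ ψ' 1 d)
            (∑ d : G'', (transMat ψ * transMat ψ') a (d⁻¹ * c) • qlsComp ψ ψ' 1 d) : ℂ)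
          = ∑ d : G'', (starRingEnd ℂ) ((transMat ψ * transMat ψ') a (d⁻¹ * c))
              * (transMat ψ * transMat ψ') a (d⁻¹ * c) := by
        rw [sum_inner]
        have hON := orthonormal_iff_ite.mp (orthRow 1)
        refine Finset.sum_congr rfl fun d _ => ?_
        rw [inner_sum]
        simp_rw [inner_smul_left, inner_smul_right, hON]
        simp
      rw [hvv, hvw, hwv, hww, hVrowsum a c]
      ring
    rw [hw]
    exact Submodule.sum_mem _ fun d _ =>
      Submodule.smul_mem _ _ (Submodule.subset_span ⟨d, rfl⟩)
  have hfinS : Module.finrank ℂ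
      ↥(Submodule.span ℂ (Set.range fun c : G'' => qlsComp ψ ψ' 1 c)) = Fintype.card G'' :=
    finrank_span_eq_card (orthRow 1).linearIndependent
  refine ⟨key, ⟨Submodule.span ℂ (Set.range fun c : G'' => qlsComp ψ ψ' 1 c), ?_, ?_, ?_⟩,
    ⟨hVu1, hVu2⟩, hVstar, ?_⟩
  · rw [hfinS, ← hcard', ← hcard]
  · -- rows
    intro a
    refine ⟨orthRow a, ?_⟩
    refine Submodule.eq_of_le_of_finrank_le ?_ ?_
    · rw [Submodule.span_le]
      rintro _ ⟨c, rfl⟩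
      exact hmem a c
    · rw [hfinS, finrank_span_eq_card (orthRow a).linearIndependent]
  · -- columns
    intro c
    refine ⟨orthCol c, ?_⟩
    refine Submodule.eq_of_le_of_finrank_le ?_ ?_
    · rw [Submodule.span_le]
      rintro _ ⟨a, rfl⟩
      exact hmem a c
    · rw [hfinS, finrank_span_eq_card (orthCol c).linearIndependent]
      exact (hcard.trans hcard').ge
  · -- multiplicativity
    intro a b c
    have hcollapse : (∑ x : G'', ∑ y : G'', if x * y = c
          then (transMat ψ * transMat ψ') a x * (transMat ψ * transMat ψ') b y else 0)
        = ∑ x : G'', (transMat ψ * transMat ψ') a x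
            * (transMat ψ * transMat ψ') b (x⁻¹ * c) := by
      refine Finset.sum_congr rfl fun x _ => ?_
      simp_rw [← eq_inv_mul_iff_mul_eq]
      rw [Finset.sum_ite_eq' Finset.univ (x⁻¹ * c)
        (fun y => (transMat ψ * transMat ψ') a x * (transMat ψ * transMat ψ') b y)]
      simp
    rw [hcollapse, Matrix.mul_apply]
    calc ∑ z : G', transMat ψ (a * b) z * transMat ψ' z c
        = ∑ z : G', ∑ x : G', transMat ψ a x * transMat ψ b (x⁻¹ * z) * transMat ψ' z c := by
          refine Finset.sum_congr rfl fun z _ => ?_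
          rw [transMat_mul hψ, Finset.sum_mul]
      _ = ∑ x : G', ∑ z : G', transMat ψ a x * transMat ψ b (x⁻¹ * z) * transMat ψ' z c :=
          Finset.sum_comm
      _ = ∑ x : G', ∑ y : G', transMat ψ a x * transMat ψ b y * transMat ψ' (x * y) c := by
          refine Finset.sum_congr rfl fun x _ => ?_
          exact (Fintype.sum_equiv (Equiv.mulLeft x) _ _ fun y => by simp).symm
      _ = ∑ x : G', ∑ y : G', ∑ s : G'', (transMat ψ a x * transMat ψ' x s)
            * (transMat ψ b y * transMat ψ' y (s⁻¹ * c)) := by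
          refine Finset.sum_congr rfl fun x _ => Finset.sum_congr rfl fun y _ => ?_
          rw [transMat_mul hψ', Finset.mul_sum]
          exact Finset.sum_congr rfl fun s _ => by ring
      _ = ∑ s : G'', ∑ x : G', ∑ y : G', (transMat ψ a x * transMat ψ' x s)
            * (transMat ψ b y * transMat ψ' y (s⁻¹ * c)) := sum3_comm _
      _ = ∑ s : G'', (∑ x : G', transMat ψ a x * transMat ψ' x s)
            * (∑ y : G', transMat ψ b y * transMat ψ' y (s⁻¹ * c)) := by
          refine Finset.sum_congr rfl fun s _ => ?_
          rw [Finset.sum_mul_sum]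
      _ = ∑ s : G'', (transMat ψ * transMat ψ') a s
            * (transMat ψ * transMat ψ') b (s⁻¹ * c) := by
          refine Finset.sum_congr rfl fun s _ => ?_
          rw [Matrix.mul_apply, Matrix.mul_apply]
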